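/- The positive part of the generating function of the D_k operators satisfies D_+(z) = Σ_{k≥1} z^k D_k = z · P_{−z/M} ∘ D_1 ∘ P_{z/M}, as an identity of formal power series in z with coefficients that are linear operators on the ring of symmetric functions. -/

import Mathlib

/-!
Common setup for "A proof of the Theta Operator Conjecture" (Romero).

* `K = ℚ(q,t)` is realized as the fraction field of `ℚ[q,t]`.
* `Λ`, the ring of symmetric functions with coefficients in `ℚ(q,t)`, is realized as the
  polynomial ring on the power sums `p 1, p 2, …` (a presentation valid in characteristic 0).
* The plethystic exponential `E[X] = ∑ hₙ[X] = exp (∑ p_k/k)` is encoded through the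
  Newton-type recursion `n·Gₙ = ∑_{k=1}^{n} c_k G_{n-k}` for the coefficients of
  `exp (∑_{k ≥ 1} c_k z^k / k)`.
* Formal series in an auxiliary variable `z` (resp. a Laurent variable) with coefficients
  in `Λ` are elements of `PowerSeries Λ` (resp. `LaurentSeries Λ`), and operator identities
  involving generating functions are stated coefficientwise / as series identities,
  pointwise on `F : Λ`.
* The modified Macdonald basis `H̃_μ` (indexed by `YoungDiagram`) is axiomatized in the
  structure `MacdonaldBasis` via the Garsia–Haiman triangularity/normalization
  characterization; all Macdonald eigenoperators (`Δ_f`, `∇`, `Π`, `Θ_k`, `Δ_v`) are then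
  defined diagonally from it.
-/

noncomputable section

namespace ThetaOperators

open scoped Classical

/-- The base field `ℚ(q,t)`. -/
abbrev K : Type := FractionRing (MvPolynomial (Fin 2) ℚ)

/-- The parameter `q`. -/
def q : K := algebraMap (MvPolynomial (Fin 2) ℚ) K (MvPolynomial.X 0)

/-- The parameter `t`. -/
def t : K := algebraMap (MvPolynomial (Fin 2) ℚ) K (MvPolynomial.X 1)

/-- `M = (1-q)(1-t)`. -/
def M : K := (1 - q) * (1 - t)

/-- The ring of symmetric functions with coefficients in `ℚ(q,t)`, presented as the
polynomial ring on the power sums. -/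
abbrev Λ : Type := MvPolynomial ℕ+ K

/-- The power sum symmetric function `p_k`. -/
def p (k : ℕ+) : Λ := MvPolynomial.X k

/-- `genF c n` is the coefficient of `z^n` in `exp (∑_{k ≥ 1} c_k z^k / k)`,
via the Newton-type recursion `n·Gₙ = ∑_{k=1}^{n} c_k G_{n-k}`. -/
def genF (c : ℕ+ → Λ) : ℕ → Λ
  | 0 => 1
  | n + 1 =>
      (((n : K) + 1)⁻¹) •
        ∑ k ∈ Finset.range (n + 1), c ⟨k + 1, Nat.succ_pos k⟩ * genF c (n - k)
  termination_by n => n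
  decreasing_by simp_wf <;> omega

/-- The complete homogeneous symmetric function `h_n`: coefficient of `z^n`
in `E[zX] = exp (∑ p_k z^k / k)`. -/
def h (n : ℕ) : Λ := genF p n

/-- The elementary symmetric function `e_n`: `E[-zX] = ∑ (-z)^n e_n`. -/
def e (n : ℕ) : Λ := (-1) ^ n * genF (fun k => -p k) n

/-- Scalar version of `genF`: coefficient of `z^n` in `exp (∑_{k≥1} c_k z^k / k)` over `K`. -/
def genK (c : ℕ+ → K) : ℕ → K
  | 0 => 1
  | n + 1 =>
      ((n : K) + 1)⁻¹ *
        ∑ k ∈ Finset.range (n + 1), c ⟨k + 1, Nat.succ_pos k⟩ * genK c (n - k)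
  termination_by n => n
  decreasing_by simp_wf <;> omega

/-- `Eser ζ n` is the coefficient of `z^n` in `E[zWX]`, where `W` is the alphabet with
power sums `p_k[W] = ζ k`.  E.g. `Eser (fun _ => -1) n = (-1)^n eₙ[X]`, so that
`∑ z^n · Eser (fun _ => -1) n = E[-zX]`. -/
def Eser (ζ : ℕ+ → K) (n : ℕ) : Λ := genF (fun k => MvPolynomial.C (ζ k) * p k) n

/-- `p_k[M] = (1-q^k)(1-t^k)`. -/
def Mk (k : ℕ+) : K := (1 - q ^ (k : ℕ)) * (1 - t ^ (k : ℕ))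

/-- `p_k[X/M]`-twist: `1/((1-q^k)(1-t^k))`.  Thus `Eser invM n = h_n[X/M]` and
`∑ z^n Eser invM n = E[zX/M]`; similarly `∑ z^n Eser (fun j => -invM j) n = E[-zX/M]`. -/
def invM (k : ℕ+) : K := (Mk k)⁻¹

/-- Plethystic translation `T_Y : F[X] ↦ F[X+Y]` by an alphabet `Y` with power sums
`p_k[Y] = a k ∈ K`. -/
def Ttr (a : ℕ+ → K) : Λ →ₐ[K] Λ :=
  MvPolynomial.aeval fun k => p k + MvPolynomial.C (a k)

/-- `f ↦ f* = f[X/M]`. -/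
def star : Λ →ₐ[K] Λ :=
  MvPolynomial.aeval fun k => MvPolynomial.C (invM k) * p k

/-- `F ↦ F[X + M/z]`, as a Laurent series in `z` with coefficients in `Λ`
(the translation `T_{M/z}`). -/
def TMz : Λ →ₐ[K] LaurentSeries Λ :=
  MvPolynomial.aeval fun k =>
    HahnSeries.C (p k) + Mk k • HahnSeries.single (-((k : ℕ) : ℤ)) (1 : Λ)

/-- `E[-zX]` as a Laurent series in `z`. -/
def EnegL : LaurentSeries Λ :=
  HahnSeries.ofPowerSeries ℤ Λ (PowerSeries.mk (Eser fun _ => -1))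

/-- The Garsia–Haiman–Tesler operator `D_k`:
`D_k F = (F[X + M/z] · E[-zX]) |_{z^k}`. -/
def D (k : ℤ) (F : Λ) : Λ := ((TMz F) * EnegL).coeff k

/-- `p_k[B_μ] = ∑_{(i,j) ∈ μ} q^{k i'} t^{k j'}` where the cell `c` of the Young diagram
has (0-based) column index `c.2` (the `q`-exponent) and row index `c.1` (the `t`-exponent). -/
def Bexp (μ : YoungDiagram) (k : ℕ+) : K :=
  ∑ c ∈ μ.cells, q ^ ((k : ℕ) * c.2) * t ^ ((k : ℕ) * c.1)

/-- `n(μ) = ∑ᵢ (i-1) μᵢ`: the sum of the (0-based) row indices of the cells. -/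
def nstat (μ : YoungDiagram) : ℕ := ∑ c ∈ μ.cells, c.1

/-- `n(μ') = ∑ᵢ (i-1) μᵢ'`: the sum of the (0-based) column indices of the cells. -/
def nstat' (μ : YoungDiagram) : ℕ := ∑ c ∈ μ.cells, c.2

/-- `h_n` for integer index (zero for negative `n`). -/
def hZ (n : ℤ) : Λ := if n < 0 then 0 else h n.toNat

/-- The Schur function, via the Jacobi–Trudi determinant. -/
def schur (μ : YoungDiagram) : Λ :=
  Matrix.det (Matrix.of fun i j : Fin (μ.colLen 0) =>
    hZ ((μ.rowLen i : ℤ) + (j : ℤ) - (i : ℤ)))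

/-- Dominance order: `lam ⊵ μ`. -/
def Dominates (lam μ : YoungDiagram) : Prop :=
  lam.card = μ.card ∧
    ∀ m : ℕ, ∑ i ∈ Finset.range m, μ.rowLen i ≤ ∑ i ∈ Finset.range m, lam.rowLen i

/-- The span of the Schur functions `s_lam` with `lam ⊵ μ`. -/
def domSpan (μ : YoungDiagram) : Submodule K Λ :=
  Submodule.span K {f | ∃ lam, Dominates lam μ ∧ f = schur lam}

/-- Plethystic twist `F[X] ↦ F[AX]` for an alphabet `A` with `p_k[A] = a k`. -/
def twist (a : ℕ+ → K) : Λ →ₐ[K] Λ :=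
  MvPolynomial.aeval fun k => MvPolynomial.C (a k) * p k

/-- Evaluation at the single-letter alphabet `X = 1` (i.e. `p_k ↦ 1`); for homogeneous `F`
of degree `n` this is the Hall scalar product `⟨F, s_(n)⟩`. -/
def ev1 : Λ →ₐ[K] K := MvPolynomial.aeval fun _ => 1

/-- The modified Macdonald basis `H̃_μ` of `Λ`, axiomatized by the Garsia–Haiman
characterization: `H̃_μ[X(q-1)] ∈ span{s_lam : lam ⊵ μ}`,
`H̃_μ[X(t-1)] ∈ span{s_lam : lam ⊵ μ'}`, and `⟨H̃_μ, s_(n)⟩ = 1`. -/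
structure MacdonaldBasis where
  H : Module.Basis YoungDiagram K Λ
  triangular_q : ∀ μ, twist (fun k => q ^ (k : ℕ) - 1) (H μ) ∈ domSpan μ
  triangular_t : ∀ μ, twist (fun k => t ^ (k : ℕ) - 1) (H μ) ∈ domSpan μ.transpose
  normalized : ∀ μ, ev1 (H μ) = 1

/-- The diagonal operator on `Λ` acting on the Macdonald basis with eigenvalues `ev`. -/
def diag (B : MacdonaldBasis) (ev : YoungDiagram → K) (F : Λ) : Λ :=
  (B.H.repr F).sum fun μ c => (ev μ * c) • B.H μ

/-- The Delta eigenoperator `Δ_f : H̃_μ ↦ f[B_μ] H̃_μ`. -/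
def Delta (B : MacdonaldBasis) (f : Λ) : Λ → Λ :=
  diag B fun μ => MvPolynomial.aeval (Bexp μ) f

/-- `∇ : H̃_μ ↦ (-1)^{|μ|} q^{n(μ')} t^{n(μ)} H̃_μ`. -/
def nabla (B : MacdonaldBasis) : Λ → Λ :=
  diag B fun μ => (-1) ^ μ.card * q ^ nstat' μ * t ^ nstat μ

/-- The inverse of `∇`. -/
def nablaInv (B : MacdonaldBasis) : Λ → Λ :=
  diag B fun μ => ((-1) ^ μ.card * q ^ nstat' μ * t ^ nstat μ)⁻¹

/-- `Π_μ = ∏_{(i,j) ∈ μ/(1)} (1 - q^i t^j)` (product over all cells but the corner). -/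
def PiEv (μ : YoungDiagram) : K :=
  ∏ c ∈ μ.cells.erase (0, 0), (1 - q ^ c.2 * t ^ c.1)

/-- The operator `Π : H̃_μ ↦ Π_μ H̃_μ`. -/
def PiOp (B : MacdonaldBasis) : Λ → Λ := diag B PiEv

/-- The inverse of `Π`. -/
def PiInv (B : MacdonaldBasis) : Λ → Λ := diag B fun μ => (PiEv μ)⁻¹

/-- The Theta operator `Θ_k = Π ∘ (multiplication by e_k[X/M]) ∘ Π⁻¹`. -/
def Theta (B : MacdonaldBasis) (k : ℕ) (F : Λ) : Λ :=
  PiOp B (star (e k) * PiInv B F)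

/-- `Δ_v = ∑_{n ≥ 0} (-v)^n Δ_{e_n}`, the diagonal operator with eigenvalues
`∏_{(i,j) ∈ μ} (1 - v q^i t^j)`. -/
def DeltaV (B : MacdonaldBasis) (v : K) : Λ → Λ :=
  diag B fun μ => ∏ c ∈ μ.cells, (1 - v * q ^ c.2 * t ^ c.1)

/-- The inverse of `Δ_v`. -/
def DeltaVInv (B : MacdonaldBasis) (v : K) : Λ → Λ :=
  diag B fun μ => (∏ c ∈ μ.cells, (1 - v * q ^ c.2 * t ^ c.1))⁻¹

/-- `v ∈ ℚ(q,t)` is a monomial `q^a t^b`. -/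
def IsMonomial (v : K) : Prop := ∃ a b : ℤ, v = q ^ a * t ^ b

/-- `∏_{(i,j) ∈ μ} (1 - q^i t^j u)` as a polynomial in `u`. -/
def cellPoly (μ : YoungDiagram) : Polynomial K :=
  ∏ c ∈ μ.cells, (1 - Polynomial.C (q ^ c.2 * t ^ c.1) * Polynomial.X)

set_option linter.unusedSectionVars false

section GenAux

variable {A : Type*} [CommRing A] [Algebra K A] {B : Type*} [CommRing B] [Algebra K B]

/-- `genF` generalized to any commutative `K`-algebra. -/
def gen (c : ℕ+ → A) : ℕ → A
  | 0 => 1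
  | n + 1 =>
      (((n : K) + 1)⁻¹) •
        ∑ k ∈ Finset.range (n + 1), c ⟨k + 1, Nat.succ_pos k⟩ * gen c (n - k)
  termination_by n => n
  decreasing_by simp_wf <;> omega

lemma gen_zero (c : ℕ+ → A) : gen c 0 = 1 := by rw [gen]

lemma gen_succ (c : ℕ+ → A) (n : ℕ) :
    gen c (n + 1) =
      (((n : K) + 1)⁻¹) •
        ∑ k ∈ Finset.range (n + 1), c ⟨k + 1, Nat.succ_pos k⟩ * gen c (n - k) := by
  rw [gen]

lemma cast_succ_ne (n : ℕ) : ((n : K) + 1) ≠ 0 := by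
  exact_mod_cast (Nat.cast_add_one_ne_zero n : ((n + 1 : ℕ) : K) ≠ 0)

lemma gen_unique (c : ℕ+ → A) (b : ℕ → A) (h0 : b 0 = 1)
    (hrec : ∀ n, b (n + 1) =
      (((n : K) + 1)⁻¹) •
        ∑ k ∈ Finset.range (n + 1), c ⟨k + 1, Nat.succ_pos k⟩ * b (n - k)) :
    ∀ n, gen c n = b n := by
  intro n
  induction n using Nat.strong_induction_on with
  | _ n ih =>
    match n with
    | 0 => rw [gen_zero, h0]
    | n + 1 =>
      rw [gen_succ, hrec]
      congr 1
      exact Finset.sum_congr rfl fun k hk => by rw [ih (n - k) (by omega)]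

lemma gen_const_like (c : ℕ+ → A) (b : ℕ → A) (h0 : b 0 = 1)
    (hrec : ∀ n, ∀ k ∈ Finset.range (n + 1),
      c ⟨k + 1, Nat.succ_pos k⟩ * b (n - k) = b (n + 1)) :
    ∀ n, gen c n = b n := by
  refine gen_unique c b h0 fun n => ?_
  rw [Finset.sum_congr rfl (hrec n), Finset.sum_const, Finset.card_range,
    ← Nat.cast_smul_eq_nsmul K, show ((n + 1 : ℕ) : K) = ((n : K) + 1) from by push_cast; ring,
    inv_smul_smul₀ (cast_succ_ne n)]

lemma map_gen (φ : A →ₐ[K] B) (c : ℕ+ → A) : ∀ n, φ (gen c n) = gen (fun k => φ (c k)) n := by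
  intro n
  induction n using Nat.strong_induction_on with
  | _ n ih =>
    match n with
    | 0 => rw [gen_zero, gen_zero, map_one]
    | n + 1 =>
      rw [gen_succ, gen_succ, map_smul, map_sum]
      congr 1
      exact Finset.sum_congr rfl fun k hk => by rw [map_mul, ih (n - k) (by omega)]

/-- The "z d/dz" operator on power series. -/
def zder (f : PowerSeries A) : PowerSeries A :=
  PowerSeries.mk fun n => (n : K) • PowerSeries.coeff n f

/-- The series `∑_{k ≥ 1} c_k z^k`. -/
def Cser (c : ℕ+ → A) : PowerSeries A :=
  PowerSeries.mk fun n => if h : 1 ≤ n then c ⟨n, h⟩ else 0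

lemma zder_mul (f g : PowerSeries A) : zder (f * g) = zder f * g + f * zder g := by
  ext n
  simp only [zder, PowerSeries.coeff_mk, map_add, PowerSeries.coeff_mul, Finset.smul_sum,
    ← Finset.sum_add_distrib]
  refine Finset.sum_congr rfl fun ij hij => ?_
  rw [Finset.HasAntidiagonal.mem_antidiagonal] at hij
  rw [← hij, Nat.cast_add, add_smul, smul_mul_assoc, mul_smul_comm]

lemma coeff_Cser_mul (c : ℕ+ → A) (f : PowerSeries A) (n : ℕ) :
    PowerSeries.coeff (n + 1) (Cser c * f) =
      ∑ k ∈ Finset.range (n + 1), c ⟨k + 1, Nat.succ_pos k⟩ * PowerSeries.coeff (n - k) f := by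
  rw [PowerSeries.coeff_mul, Finset.Nat.sum_antidiagonal_eq_sum_range_succ_mk,
    Finset.sum_range_succ']
  simp only [Cser, PowerSeries.coeff_mk]
  rw [dif_neg (Nat.not_succ_le_zero 0)]
  simp only [zero_mul, add_zero]
  refine Finset.sum_congr rfl fun k hk => ?_
  rw [dif_pos (by omega)]
  rw [show n + 1 - (k + 1) = n - k from by omega]

lemma gen_rec (c : ℕ+ → A) :
    zder (PowerSeries.mk (gen c)) = Cser c * PowerSeries.mk (gen c) := by
  ext n
  match n with
  | 0 =>
    simp [zder, Cser, PowerSeries.coeff_mul]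
  | n + 1 =>
    rw [coeff_Cser_mul]
    simp only [zder, PowerSeries.coeff_mk]
    rw [gen_succ, smul_smul]
    rw [show ((n + 1 : ℕ) : K) = ((n : K) + 1) by push_cast; ring,
      mul_inv_cancel₀ (cast_succ_ne n), one_smul]

lemma rec_of_zder {c : ℕ+ → A} {f : PowerSeries A} (h : zder f = Cser c * f) (n : ℕ) :
    PowerSeries.coeff (n + 1) f =
      (((n : K) + 1)⁻¹) •
        ∑ k ∈ Finset.range (n + 1), c ⟨k + 1, Nat.succ_pos k⟩ * PowerSeries.coeff (n - k) f := by
  have h1 := congrArg (PowerSeries.coeff (n + 1)) h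
  rw [coeff_Cser_mul] at h1
  simp only [zder, PowerSeries.coeff_mk] at h1
  rw [← h1, smul_smul, show ((n + 1 : ℕ) : K) = ((n : K) + 1) by push_cast; ring,
    inv_mul_cancel₀ (cast_succ_ne n), one_smul]

lemma gen_mul (c d : ℕ+ → A) :
    PowerSeries.mk (gen (fun k => c k + d k)) =
      PowerSeries.mk (gen c) * PowerSeries.mk (gen d) := by
  have hz : zder (PowerSeries.mk (gen c) * PowerSeries.mk (gen d)) =
      Cser (fun k => c k + d k) * (PowerSeries.mk (gen c) * PowerSeries.mk (gen d)) := by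
    rw [zder_mul, gen_rec, gen_rec]
    have : Cser (fun k => c k + d k) = Cser c + Cser d := by
      ext m
      simp only [Cser, PowerSeries.coeff_mk, map_add]
      split <;> simp
    rw [this]; ring
  ext n
  rw [PowerSeries.coeff_mk]
  refine gen_unique _ (fun n => PowerSeries.coeff n (PowerSeries.mk (gen c) * PowerSeries.mk (gen d))) ?_ (fun m => rec_of_zder hz m) n
  show PowerSeries.coeff 0 _ = 1
  rw [PowerSeries.coeff_mul]
  simp [gen_zero]

lemma gen_zero_fun : ∀ n, gen (fun _ => (0 : A)) n = if n = 0 then 1 else 0 := by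
  intro n
  match n with
  | 0 => rw [gen_zero]; simp
  | n + 1 => rw [gen_succ]; simp

end GenAux

section Specific

set_option maxHeartbeats 1000000
set_option synthInstance.maxHeartbeats 1000000

lemma genF_eq_gen (c : ℕ+ → Λ) : ∀ n, genF c n = gen c n := by
  intro n
  induction n using Nat.strong_induction_on with
  | _ n ih =>
    match n with
    | 0 => rw [genF, gen_zero]
    | n + 1 =>
      rw [genF, gen_succ]
      congr 1
      exact Finset.sum_congr rfl fun k hk => by rw [ih (n - k) (by omega)]

lemma Mk_ne_zero (k : ℕ+) : Mk k ≠ 0 := by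
  have key : ∀ i : Fin 2,
      (1 : K) - (algebraMap (MvPolynomial (Fin 2) ℚ) K (MvPolynomial.X i)) ^ (k : ℕ) ≠ 0 := by
    intro i h
    rw [← map_pow, ← map_one (algebraMap (MvPolynomial (Fin 2) ℚ) K), ← map_sub,
      map_eq_zero_iff _ (IsFractionRing.injective (MvPolynomial (Fin 2) ℚ) K)] at h
    have h2 := congrArg (MvPolynomial.eval fun _ => (2 : ℚ)) h
    simp only [map_sub, map_one, map_pow, MvPolynomial.eval_X, map_zero] at h2
    have h3 : (1 : ℚ) < 2 ^ (k : ℕ) := one_lt_pow₀ (by norm_num) k.pos.ne'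
    linarith
  exact mul_ne_zero (key 0) (key 1)

lemma invM_mul_Mk (k : ℕ+) : invM k * Mk k = 1 := inv_mul_cancel₀ (Mk_ne_zero k)

lemma algebraMapLS (x : K) :
    algebraMap K (LaurentSeries Λ) x = HahnSeries.C (MvPolynomial.C x) := by
  rw [HahnSeries.algebraMap_apply', PowerSeries.algebraMap_apply,
    HahnSeries.ofPowerSeries_C, MvPolynomial.algebraMap_eq]

/-- `HahnSeries.C` as a `K`-algebra hom `Λ →ₐ[K] LaurentSeries Λ`. -/
def algC : Λ →ₐ[K] LaurentSeries Λ :=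
  { (HahnSeries.C : Λ →+* LaurentSeries Λ) with
    commutes' := fun r => by
      rw [algebraMapLS]
      show HahnSeries.C (algebraMap K Λ r) = _
      rw [MvPolynomial.algebraMap_eq]}

lemma algC_apply (x : Λ) : algC x = HahnSeries.C x := rfl

lemma algC_gen (c : ℕ+ → Λ) : ∀ n, algC (gen c n) = gen (fun k => algC (c k)) n := by
  intro n
  induction n using Nat.strong_induction_on with
  | _ n ih =>
    match n with
    | 0 => rw [gen_zero, gen_zero, map_one]
    | n + 1 =>
      rw [gen_succ, gen_succ, Algebra.smul_def, map_mul, AlgHom.commutes, map_sum,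
        ← Algebra.smul_def]
      congr 1
      exact Finset.sum_congr rfl fun k hk => by rw [map_mul, ih (n - k) (by omega)]

lemma TMz_gen (c : ℕ+ → Λ) : ∀ n, TMz (gen c n) = gen (fun k => TMz (c k)) n := by
  intro n
  induction n using Nat.strong_induction_on with
  | _ n ih =>
    match n with
    | 0 => rw [gen_zero, gen_zero, map_one]
    | n + 1 =>
      rw [gen_succ, gen_succ, Algebra.smul_def, map_mul, AlgHom.commutes, map_sum,
        ← Algebra.smul_def]
      congr 1
      exact Finset.sum_congr rfl fun k hk => by rw [map_mul, ih (n - k) (by omega)]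

/-- the c-sequence of `E[zX/M]`. -/
def c0 : ℕ+ → Λ := fun k => MvPolynomial.C (invM k) * p k

lemma Eser_invM_eq (n : ℕ) : Eser invM n = gen c0 n := genF_eq_gen _ n

lemma gen_single :
    ∀ n, gen (fun k : ℕ+ => (HahnSeries.single (-((k : ℕ) : ℤ)) 1 : LaurentSeries Λ)) n
      = HahnSeries.single (-(n : ℤ)) (1 : Λ) := by
  refine gen_const_like _ _ (by simpa using HahnSeries.single_zero_one) fun n k hk => ?_
  rw [Finset.mem_range] at hk
  rw [HahnSeries.single_mul_single, one_mul]
  have hE : (-(((⟨k + 1, Nat.succ_pos k⟩ : ℕ+) : ℕ) : ℤ) + -((n - k : ℕ) : ℤ))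
      = -((n + 1 : ℕ) : ℤ) := by
    have hcoe : (((⟨k + 1, Nat.succ_pos k⟩ : ℕ+) : ℕ) : ℤ) = (k : ℤ) + 1 := by norm_num
    rw [hcoe, Nat.cast_sub (by omega)]
    push_cast
    ring
  exact congrArg (fun a : ℤ => (HahnSeries.single a (1 : Λ) : LaurentSeries Λ)) hE

lemma TMz_c0 (k : ℕ+) :
    TMz (c0 k) = HahnSeries.C (c0 k) + HahnSeries.single (-((k : ℕ) : ℤ)) (1 : Λ) := by
  have hsm : (Mk k) • (HahnSeries.single (-((k : ℕ) : ℤ)) (1 : Λ) : LaurentSeries Λ)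
      = HahnSeries.single (-((k : ℕ) : ℤ)) (MvPolynomial.C (Mk k)) := by
    ext a
    rw [HahnSeries.coeff_smul]
    by_cases h : a = (-((k : ℕ) : ℤ))
    · subst h; simp [HahnSeries.coeff_single_same, Algebra.smul_def,
        MvPolynomial.algebraMap_eq]
    · simp [HahnSeries.coeff_single_of_ne h]
  have halg : (algebraMap K (LaurentSeries Λ)) (invM k)
      = HahnSeries.C (MvPolynomial.C (invM k)) := algebraMapLS _
  rw [c0, TMz, map_mul, MvPolynomial.aeval_C, show p k = MvPolynomial.X k from rfl,
    MvPolynomial.aeval_X, halg, hsm, mul_add]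
  congr 1
  · rw [← map_mul]; rfl
  · rw [HahnSeries.C_apply, HahnSeries.single_mul_single, zero_add, ← map_mul,
      invM_mul_Mk, map_one]

lemma TMz_Eser (b : ℕ) :
    TMz (Eser invM b) =
      ∑ k ∈ Finset.range (b + 1),
        HahnSeries.single (-((b - k : ℕ) : ℤ)) (Eser invM k) := by
  rw [Eser_invM_eq]
  rw [TMz_gen c0 b]
  have hc : (fun k => TMz (c0 k)) =
      fun k => algC (c0 k) + (HahnSeries.single (-((k : ℕ) : ℤ)) (1 : Λ) : LaurentSeries Λ) := by
    funext k
    rw [TMz_c0, algC_apply]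
  rw [hc]
  have := congrArg (PowerSeries.coeff b)
    (gen_mul (fun k => algC (c0 k))
      (fun k : ℕ+ => (HahnSeries.single (-((k : ℕ) : ℤ)) 1 : LaurentSeries Λ)))
  rw [PowerSeries.coeff_mk, PowerSeries.coeff_mul,
    Finset.Nat.sum_antidiagonal_eq_sum_range_succ_mk] at this
  rw [this]
  refine Finset.sum_congr rfl fun k hk => ?_
  rw [PowerSeries.coeff_mk, PowerSeries.coeff_mk, ← algC_gen c0 k, gen_single,
    algC_apply, Eser_invM_eq, HahnSeries.C_apply, HahnSeries.single_mul_single, zero_add,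
    mul_one]

lemma D_one_mul (F : Λ) (b : ℕ) :
    D 1 (Eser invM b * F) =
      ∑ k ∈ Finset.range (b + 1), Eser invM k * D (1 + ((b - k : ℕ) : ℤ)) F := by
  unfold D
  rw [map_mul, TMz_Eser, mul_assoc, Finset.sum_mul]
  have hs := map_sum (HahnSeries.coeff.addMonoidHom (1 : ℤ))
      (fun i => HahnSeries.single (-((b - i : ℕ) : ℤ)) (Eser invM i) * (TMz F * EnegL))
      (Finset.range (b + 1))
  simp only [HahnSeries.coeff.addMonoidHom_apply] at hs
  rw [hs]
  refine Finset.sum_congr rfl fun k hk => ?_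
  show (HahnSeries.single (-((b - k : ℕ) : ℤ)) (Eser invM k) * (TMz F * EnegL)).coeff 1 = _
  have h1 : (1 : ℤ) = (1 + ((b - k : ℕ) : ℤ)) + (-((b - k : ℕ) : ℤ)) := by ring
  conv_lhs => rw [h1]
  rw [HahnSeries.coeff_single_mul_add]

lemma Dser_eq (F : Λ) :
    (PowerSeries.mk fun b => D 1 (Eser invM b * F)) =
      PowerSeries.mk (Eser invM) * PowerSeries.mk (fun j => D (1 + (j : ℤ)) F) := by
  refine PowerSeries.ext fun b => ?_
  rw [PowerSeries.coeff_mk, PowerSeries.coeff_mul,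
    Finset.Nat.sum_antidiagonal_eq_sum_range_succ_mk, D_one_mul]
  exact Finset.sum_congr rfl fun k hk => by rw [PowerSeries.coeff_mk, PowerSeries.coeff_mk]

lemma neg_conv :
    (PowerSeries.mk fun n => Eser (fun j => -invM j) n) * PowerSeries.mk (Eser invM) = 1 := by
  have h1 : ∀ n, Eser (fun j => -invM j) n = gen (fun k => -(c0 k)) n := by
    intro n
    rw [Eser, genF_eq_gen]
    congr 1
    funext k
    rw [c0, map_neg]
    ring
  have h2 : (PowerSeries.mk fun n => Eser (fun j => -invM j) n) =
      PowerSeries.mk (gen (fun k => -(c0 k))) := by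
    refine PowerSeries.ext fun n => ?_
    rw [PowerSeries.coeff_mk, PowerSeries.coeff_mk, h1]
  have h3 : PowerSeries.mk (Eser invM) = PowerSeries.mk (gen c0) := by
    refine PowerSeries.ext fun n => ?_
    rw [PowerSeries.coeff_mk, PowerSeries.coeff_mk, Eser_invM_eq]
  rw [h2, h3, ← gen_mul]
  refine PowerSeries.ext fun n => ?_
  rw [show (fun k => -(c0 k) + c0 k) = fun _ => (0 : Λ) from funext fun k => neg_add_cancel _]
  rw [PowerSeries.coeff_mk, gen_zero_fun, PowerSeries.coeff_one]

end Specific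

/-- `D_+(z) = ∑_{k ≥ 1} z^k D_k = z · P_{-z/M} ∘ D_1 ∘ P_{z/M}`. -/
theorem Dplus_eq (F : Λ) :
    (PowerSeries.mk fun k => if 1 ≤ k then D (k : ℤ) F else 0)
      = PowerSeries.X
          * ((PowerSeries.mk fun n => Eser (fun j => -invM j) n)
              * PowerSeries.mk fun n => D 1 (Eser invM n * F)) := by
  rw [Dser_eq, ← mul_assoc (PowerSeries.mk fun n => Eser (fun j => -invM j) n), neg_conv,
    one_mul]
  refine PowerSeries.ext fun k => ?_
  match k with
  | 0 => simp
  | k + 1 =>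
    rw [PowerSeries.coeff_mk, PowerSeries.coeff_succ_X_mul, PowerSeries.coeff_mk,
      if_pos (by omega)]
    congr 1
    push_cast
    ring

end ThetaOperators
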